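/- For every $a \ge 3$ and $n = 2^a$, there do not exist conjugacy classes $C$ and $D$ of $A_n$, both consisting of elements of prime order, such that $\langle c, d \rangle = A_n$ for all $(c,d) \in C \times D$. -/

import Mathlib

set_option linter.unusedSectionVars false
set_option maxHeartbeats 1600000

open Equiv Equiv.Perm Subgroup

namespace Stmt17

variable {α : Type*} [Fintype α] [DecidableEq α]

lemma cycleType_of_prime (p : ℕ) (hp : p.Prime) (σ : Perm α) (hσ : orderOf σ = p) :
    σ.cycleType = Multiset.replicate (σ.support.card / p) p := by
  have h1 : (orderOf σ).Prime := by rw [hσ]; exact hp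
  obtain ⟨m, hm⟩ := Equiv.Perm.cycleType_prime_order h1
  rw [hσ] at hm
  have hsum := σ.sum_cycleType
  rw [hm, Multiset.sum_replicate, smul_eq_mul] at hsum
  rw [hm, ← hsum, Nat.mul_div_cancel _ hp.pos]

lemma isConj_of_prime (p : ℕ) (hp : p.Prime) (σ τ : Perm α) (hσ : orderOf σ = p)
    (hτ : orderOf τ = p) (h : σ.support.card = τ.support.card) : IsConj σ τ := by
  rw [Equiv.Perm.isConj_iff_cycleType_eq, cycleType_of_prime p hp σ hσ,
    cycleType_of_prime p hp τ hτ, h]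

lemma sign_involution (σ : Perm α) (h2 : orderOf σ = 2) :
    Perm.sign σ = (-1) ^ (σ.support.card / 2) := by
  have hct := cycleType_of_prime 2 Nat.prime_two σ h2
  rw [Equiv.Perm.sign_of_cycleType, hct, Multiset.sum_replicate, Multiset.card_replicate,
    smul_eq_mul]
  rw [pow_add, pow_mul]
  simp

lemma even_conj_of_comm (σ τ u : Perm α) (h : IsConj σ τ) (hc : u * σ * u⁻¹ = σ)
    (hu : Perm.sign u = -1) : ∃ g, Perm.sign g = 1 ∧ g * σ * g⁻¹ = τ := by
  obtain ⟨g, hg⟩ := isConj_iff.mp h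
  rcases Int.units_eq_one_or (Perm.sign g) with h1 | h1
  · exact ⟨g, h1, hg⟩
  · refine ⟨g * u, by simp [h1, hu], ?_⟩
    have : (g * u) * σ * (g * u)⁻¹ = g * (u * σ * u⁻¹) * g⁻¹ := by group
    rw [this, hc, hg]

lemma swap_conj_self (σ : Perm α) (h2 : σ * σ = 1) (x : α) :
    Equiv.swap x (σ x) * σ * (Equiv.swap x (σ x))⁻¹ = σ := by
  have hxx : σ (σ x) = x := by
    rw [← Perm.mul_apply, h2, Perm.one_apply]
  have key : σ * Equiv.swap x (σ x) * σ⁻¹ = Equiv.swap x (σ x) := by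
    rw [← Equiv.swap_apply_apply σ x (σ x), hxx, Equiv.swap_comm]
  have key2 : σ * Equiv.swap x (σ x) = Equiv.swap x (σ x) * σ := by
    have := congrArg (· * σ) key
    simpa [mul_assoc] using this
  rw [← key2]
  group

lemma exists_fresh (s : Finset α) (h : s.card + 2 ≤ Fintype.card α) :
    ∃ u v, u ≠ v ∧ u ∉ s ∧ v ∉ s := by
  have h2 : 1 < sᶜ.card := by rw [Finset.card_compl]; omega
  obtain ⟨u, hu, v, hv, huv⟩ := Finset.one_lt_card.mp h2
  exact ⟨u, v, huv, Finset.mem_compl.mp hu, Finset.mem_compl.mp hv⟩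

lemma exists_even_send (hcard : 6 ≤ Fintype.card α) (z z' : α) :
    ∃ w : Perm α, Perm.sign w = 1 ∧ w z = z' := by
  by_cases hzz : z = z'
  · exact ⟨1, by simp, by simp [hzz]⟩
  obtain ⟨u, v, huv, hu, hv⟩ := exists_fresh ({z, z'} : Finset α)
    (le_trans (by
      have := Finset.card_insert_le z ({z'} : Finset α)
      simp only [Finset.card_singleton] at this
      omega) hcard)
  simp only [Finset.mem_insert, Finset.mem_singleton, not_or] at hu hv
  refine ⟨Equiv.swap z z' * Equiv.swap u v, ?_, ?_⟩
  · simp [Equiv.Perm.sign_swap, hzz, huv]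
  · rw [Perm.mul_apply, Equiv.swap_apply_of_ne_of_ne (Ne.symm hu.1) (Ne.symm hv.1),
      Equiv.swap_apply_left]

lemma exists_even_map_two (hcard : 6 ≤ Fintype.card α) (x1 x2 y1 y2 : α)
    (hx : x1 ≠ x2) (hy : y1 ≠ y2) :
    ∃ g : Perm α, Perm.sign g = 1 ∧ g x1 = y1 ∧ g x2 = y2 := by
  set g1 := Equiv.swap x1 y1 with hg1
  have hx2' : g1 x2 ≠ y1 := by
    intro h
    have : g1 x2 = g1 x1 := by rw [h, hg1, Equiv.swap_apply_left]
    exact hx (g1.injective this).symm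
  set g2 := Equiv.swap (g1 x2) y2 with hg2
  have h1 : (g2 * g1) x1 = y1 := by
    rw [Perm.mul_apply, hg1, Equiv.swap_apply_left, hg2,
      Equiv.swap_apply_of_ne_of_ne (Ne.symm hx2') hy]
  have h2 : (g2 * g1) x2 = y2 := by
    rw [Perm.mul_apply, hg2, Equiv.swap_apply_left]
  rcases Int.units_eq_one_or (Perm.sign (g2 * g1)) with hs | hs
  · exact ⟨g2 * g1, hs, h1, h2⟩
  · obtain ⟨u, v, huv, hu, hv⟩ := exists_fresh ({x1, x2} : Finset α)
      (le_trans (by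
        have := Finset.card_insert_le x1 ({x2} : Finset α)
        simp only [Finset.card_singleton] at this
        omega) hcard)
    simp only [Finset.mem_insert, Finset.mem_singleton, not_or] at hu hv
    refine ⟨g2 * g1 * Equiv.swap u v, by simp [hs, Equiv.Perm.sign_swap, huv], ?_, ?_⟩
    · rw [Perm.mul_apply, Equiv.swap_apply_of_ne_of_ne (Ne.symm hu.1) (Ne.symm hv.1), h1]
    · rw [Perm.mul_apply, Equiv.swap_apply_of_ne_of_ne (Ne.symm hu.2) (Ne.symm hv.2), h2]


def fixSub (z : α) : Subgroup (Perm α) where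
  carrier := {σ | σ z = z}
  one_mem' := rfl
  mul_mem' := by
    intro p q hp hq
    simp only [Set.mem_setOf_eq] at *
    rw [Perm.mul_apply, hq, hp]
  inv_mem' := by
    intro p hp
    simp only [Set.mem_setOf_eq] at *
    exact Perm.inv_eq_iff_eq.mpr hp.symm

lemma mem_fixSub {z : α} {σ : Perm α} : σ ∈ fixSub z ↔ σ z = z := Iff.rfl

def pairSub (y1 y2 : α) : Subgroup (Perm α) where
  carrier := {σ | (σ y1 = y1 ∧ σ y2 = y2) ∨ (σ y1 = y2 ∧ σ y2 = y1)}
  one_mem' := Or.inl ⟨rfl, rfl⟩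
  mul_mem' := by
    rintro p q (⟨h1, h2⟩ | ⟨h1, h2⟩) (⟨g1, g2⟩ | ⟨g1, g2⟩) <;>
      simp only [Set.mem_setOf_eq, Perm.mul_apply] <;>
      rw [g1, g2]
    · exact Or.inl ⟨h1, h2⟩
    · exact Or.inr ⟨h2, h1⟩
    · exact Or.inr ⟨h1, h2⟩
    · exact Or.inl ⟨h2, h1⟩
  inv_mem' := by
    rintro p (⟨h1, h2⟩ | ⟨h1, h2⟩)
    · exact Or.inl ⟨Perm.inv_eq_iff_eq.mpr h1.symm, Perm.inv_eq_iff_eq.mpr h2.symm⟩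
    · exact Or.inr ⟨Perm.inv_eq_iff_eq.mpr h2.symm, Perm.inv_eq_iff_eq.mpr h1.symm⟩

lemma mem_pairSub {y1 y2 : α} {σ : Perm α} :
    σ ∈ pairSub y1 y2 ↔ (σ y1 = y1 ∧ σ y2 = y2) ∨ (σ y1 = y2 ∧ σ y2 = y1) := Iff.rfl

lemma contra (c d : alternatingGroup α)
    (H : ∀ c' d' : alternatingGroup α, IsConj c c' → IsConj d d' →
        Subgroup.closure {c', d'} = ⊤)
    (K : Subgroup (Perm α)) (X Y w : Perm α)
    (hX : X ∈ K) (hY : Y ∈ K) (hw : Perm.sign w = 1) (hwK : w ∉ K)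
    (u v : Perm α) (hu : Perm.sign u = 1) (hv : Perm.sign v = 1)
    (hcu : u * ↑c * u⁻¹ = X) (hdv : v * ↑d * v⁻¹ = Y) : False := by
  have hcs : Perm.sign (↑c : Perm α) = 1 := mem_alternatingGroup.mp c.2
  have hds : Perm.sign (↑d : Perm α) = 1 := mem_alternatingGroup.mp d.2
  have hXs : Perm.sign X = 1 := by rw [← hcu]; simp [hu, hcs]
  have hYs : Perm.sign Y = 1 := by rw [← hdv]; simp [hv, hds]
  set c' : alternatingGroup α := ⟨X, mem_alternatingGroup.mpr hXs⟩ with hc'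
  set d' : alternatingGroup α := ⟨Y, mem_alternatingGroup.mpr hYs⟩ with hd'
  have hic : IsConj c c' := by
    refine isConj_iff.mpr ⟨⟨u, mem_alternatingGroup.mpr hu⟩, ?_⟩
    apply Subtype.ext
    push_cast
    exact hcu
  have hid : IsConj d d' := by
    refine isConj_iff.mpr ⟨⟨v, mem_alternatingGroup.mpr hv⟩, ?_⟩
    apply Subtype.ext
    push_cast
    exact hdv
  have htop := H c' d' hic hid
  have hle : Subgroup.closure {c', d'} ≤ K.comap (alternatingGroup α).subtype := by
    rw [Subgroup.closure_le]
    rintro x (rfl | rfl)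
    · exact hX
    · exact hY
  have hm : (⟨w, mem_alternatingGroup.mpr hw⟩ : alternatingGroup α) ∈
      Subgroup.closure ({c', d'} : Set (alternatingGroup α)) := by
    rw [htop]; trivial
  exact hwK (hle hm)


lemma field_setup (a : ℕ) (ha : 3 ≤ a) (q : ℕ) (hq : q.Prime) (hdvd : q ∣ 2 ^ a - 1) :
    ∃ (K : Subgroup (Perm (Fin (2 ^ a)))) (T M M' h : Perm (Fin (2 ^ a))),
      T ∈ K ∧ M ∈ K ∧ M' ∈ K ∧
      T * T = 1 ∧ (∀ x, T x ≠ x) ∧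
      orderOf M = q ∧ (∃ y, ∀ z, M z = z ↔ z = y) ∧
      Perm.sign h = -1 ∧ h * M * h⁻¹ = M' ∧
      ∃ w, Perm.sign w = 1 ∧ w ∉ K := by
  have ha0 : a ≠ 0 := by omega
  have hn8 : 8 ≤ 2 ^ a := by
    calc (8 : ℕ) = 2 ^ 3 := by norm_num
    _ ≤ 2 ^ a := Nat.pow_le_pow_right (by norm_num) ha
  classical
  set F := GaloisField 2 a with hF
  letI : Fintype F := Fintype.ofFinite F
  letI : DecidableEq F := Classical.decEq F
  have hcF : Fintype.card F = 2 ^ a := by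
    rw [← Nat.card_eq_fintype_card]; exact GaloisField.card 2 a ha0
  have hcU : Fintype.card Fˣ = 2 ^ a - 1 := by rw [Fintype.card_units, hcF]
  haveI : Fact q.Prime := ⟨hq⟩
  obtain ⟨ζu, hζu⟩ := exists_prime_orderOf_dvd_card (G := Fˣ) q (by rw [hcU]; exact hdvd)
  set ζ : F := (ζu : F) with hζ
  have hζ0 : ζ ≠ 0 := ζu.ne_zero
  have hζ1 : ζ ≠ 1 := by
    intro h
    have h1 : ζu = 1 := Units.ext h
    rw [h1, orderOf_one] at hζu
    exact hq.one_lt.ne' hζu.symm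
  have hζq : ζ ^ q = 1 := by
    have h1 : ζu ^ q = 1 := by rw [← hζu]; exact pow_orderOf_eq_one ζu
    have := congrArg (Units.val) h1
    push_cast at this
    exact this
  -- the equivalence
  set e : Fin (2 ^ a) ≃ F := Fintype.equivOfCardEq (by simp [hcF]) with he
  set dn : Perm F → Perm (Fin (2 ^ a)) := fun f => (e.symm).permCongr f with hdn
  have dn_apply : ∀ (f : Perm F) (x : Fin (2 ^ a)), dn f x = e.symm (f (e x)) := by
    intro f x; simp [hdn, Equiv.permCongr_apply]
  have dn_mul : ∀ f g : Perm F, dn (f * g) = dn f * dn g := by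
    intro f g; ext x; simp [dn_apply, Perm.mul_apply]
  have dn_one : dn 1 = 1 := by ext x; simp [dn_apply]
  -- the affine subgroup
  set K : Subgroup (Perm (Fin (2 ^ a))) :=
    { carrier := {σ | ∃ r s : F, r ≠ 0 ∧ ∀ x, e (σ x) = r * e x + s},
      one_mem' := ⟨1, 0, one_ne_zero, by simp⟩,
      mul_mem' := by
        rintro p1 p2 ⟨r1, s1, hr1, h1⟩ ⟨r2, s2, hr2, h2⟩
        exact ⟨r1 * r2, r1 * s2 + s1, mul_ne_zero hr1 hr2, fun x => by
          rw [Perm.mul_apply, h1, h2]; ring⟩,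
      inv_mem' := by
        rintro p ⟨r, s, hr, hform⟩
        refine ⟨r⁻¹, -(r⁻¹ * s), inv_ne_zero hr, fun x => ?_⟩
        have h' := hform (p⁻¹ x)
        rw [show p (p⁻¹ x) = x from p.apply_symm_apply x] at h'
        rw [h', mul_add, ← mul_assoc, inv_mul_cancel₀ hr, one_mul]; ring } with hK
  have memK : ∀ σ : Perm (Fin (2 ^ a)),
      (∃ r s : F, r ≠ 0 ∧ ∀ x, e (σ x) = r * e x + s) → σ ∈ K := fun σ h => h
  have memK' : ∀ σ : Perm (Fin (2 ^ a)), σ ∈ K →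
      (∃ r s : F, r ≠ 0 ∧ ∀ x, e (σ x) = r * e x + s) := fun σ h => h
  have hwitness : ∃ w : Perm (Fin (2 ^ a)), Perm.sign w = 1 ∧ w ∉ K := by
    obtain ⟨z0, z1, z2, z3, z4, d01, d02, d12, d30, d31, d32, d40, d41, d42, d34⟩ :
        ∃ z0 z1 z2 z3 z4 : Fin (2 ^ a), z0 ≠ z1 ∧ z0 ≠ z2 ∧ z1 ≠ z2 ∧ z3 ≠ z0 ∧ z3 ≠ z1 ∧
          z3 ≠ z2 ∧ z4 ≠ z0 ∧ z4 ≠ z1 ∧ z4 ≠ z2 ∧ z3 ≠ z4 := by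
      refine ⟨⟨0, by omega⟩, ⟨1, by omega⟩, ⟨2, by omega⟩, ⟨3, by omega⟩, ⟨4, by omega⟩,
        ?_, ?_, ?_, ?_, ?_, ?_, ?_, ?_, ?_, ?_⟩ <;> simp [Fin.ext_iff]
    set w := Equiv.swap z0 z1 * Equiv.swap z1 z2 with hw
    have hw3 : w z3 = z3 := by
      rw [hw, Perm.mul_apply, Equiv.swap_apply_of_ne_of_ne d31 d32,
        Equiv.swap_apply_of_ne_of_ne d30 d31]
    have hw4 : w z4 = z4 := by
      rw [hw, Perm.mul_apply, Equiv.swap_apply_of_ne_of_ne d41 d42,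
        Equiv.swap_apply_of_ne_of_ne d40 d41]
    have hw0 : w z0 = z1 := by
      rw [hw, Perm.mul_apply, Equiv.swap_apply_of_ne_of_ne d01 d02,
        Equiv.swap_apply_left]
    refine ⟨w, ?_, ?_⟩
    · rw [hw, map_mul, Equiv.Perm.sign_swap d01, Equiv.Perm.sign_swap d12]
      norm_num
    · intro hmem
      obtain ⟨r, s, hr, hform⟩ := memK' w hmem
      have h3 := hform z3
      rw [hw3] at h3
      have h4 := hform z4
      rw [hw4] at h4
      have hr1 : r = 1 := by
        by_contra hne
        have hz : (1 - r) * (e z3 - e z4) = 0 := by linear_combination h3 - h4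
        rcases mul_eq_zero.mp hz with h | h
        · exact hne (by linear_combination -h)
        · exact d34 (e.injective (by linear_combination h))
      have hs0 : s = 0 := by
        rw [hr1, one_mul] at h3
        linear_combination -h3
      have h0 := hform z0
      rw [hw0, hr1, hs0, one_mul, add_zero] at h0
      exact d01 (e.injective h0).symm
  -- elements
  set TF : Perm F := Equiv.addRight (1 : F) with hTF
  set MF : Perm F := Equiv.mulLeft₀ ζ hζ0 with hMF
  set MF' : Perm F := Equiv.mulLeft₀ ζ⁻¹ (inv_ne_zero hζ0) with hMF'
  set hFp : Perm F := Function.Involutive.toPerm (fun x => x⁻¹) (fun x => inv_inv x) with hhFp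
  have hFp_apply : ∀ x : F, hFp x = x⁻¹ := fun x => rfl
  set T := dn TF with hT
  set M := dn MF with hM
  set M' := dn MF' with hM'
  set hp : Perm (Fin (2 ^ a)) := dn hFp with hhp
  refine ⟨K, T, M, M', hp, ?_, ?_, ?_, ?_, ?_, ?_, ?_, ?_, ?_, ?_⟩
  · exact memK T ⟨1, 1, one_ne_zero, fun x => by rw [hT, dn_apply]; simp [hTF]⟩
  · exact memK M ⟨ζ, 0, hζ0, fun x => by rw [hM, dn_apply]; simp [hMF]⟩
  · exact memK M' ⟨ζ⁻¹, 0, inv_ne_zero hζ0, fun x => by rw [hM', dn_apply]; simp [hMF']⟩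
  · -- T * T = 1
    rw [hT, ← dn_mul, ← dn_one]
    congr 1
    ext x
    simp only [Perm.mul_apply, Perm.one_apply, hTF, Equiv.coe_addRight]
    rw [add_assoc, CharTwo.add_self_eq_zero (1 : F), add_zero]
  · -- T ffp
    intro x hx
    rw [hT, dn_apply] at hx
    have : TF (e x) = e x := by
      have := congrArg e hx
      rwa [Equiv.apply_symm_apply] at this
    simp only [hTF, Equiv.coe_addRight] at this
    exact one_ne_zero (by linear_combination this)
  · -- orderOf M = q
    have hMq : M ^ q = 1 := by
      have hdnpow : ∀ (k : ℕ), dn (MF ^ k) = (dn MF) ^ k := by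
        intro k; induction k with
        | zero => simpa using dn_one
        | succ k ih => rw [pow_succ, dn_mul, ih, pow_succ]
      have hMFq : MF ^ q = 1 := by
        have hMFpow : ∀ (k : ℕ) (x : F), (MF ^ k) x = ζ ^ k * x := by
          intro k; induction k with
          | zero => intro x; simp
          | succ k ih => intro x; rw [pow_succ, Perm.mul_apply, ih, pow_succ]
                         simp only [hMF, Equiv.mulLeft₀_apply]
                         ring
        ext x; rw [hMFpow q x, hζq, one_mul, Perm.one_apply]
      rw [hM, ← hdnpow, hMFq, dn_one]
    have hMne : M ≠ 1 := by
      intro h1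
      have : M (e.symm 1) = e.symm 1 := by rw [h1, Perm.one_apply]
      rw [hM, dn_apply, Equiv.apply_symm_apply] at this
      have h2 : MF (1 : F) = (1 : F) := by
        have h3 := congrArg e this
        rw [Equiv.apply_symm_apply, Equiv.apply_symm_apply] at h3
        exact h3
      simp only [hMF, Equiv.mulLeft₀_apply, mul_one] at h2
      exact hζ1 h2
    exact orderOf_eq_prime hMq hMne
  · -- unique fixed point of M
    refine ⟨e.symm 0, fun z => ?_⟩
    rw [hM, dn_apply, Equiv.symm_apply_eq]
    simp only [hMF, Equiv.mulLeft₀_apply]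
    constructor
    · intro hzz
      have h0 : e z = 0 := by
        by_contra hne
        exact hζ1 (mul_right_cancel₀ hne (by rw [hzz, one_mul]))
      exact (Equiv.eq_symm_apply e).mpr h0
    · intro hz
      rw [hz, Equiv.apply_symm_apply, mul_zero]
  · -- sign hp = -1
    have hinv : hp * hp = 1 := by
      rw [hhp, ← dn_mul, ← dn_one]; congr 1; ext x; simp [Perm.mul_apply, hFp_apply]; exact inv_inv x
    have hfix : ∀ x : Fin (2 ^ a), hp x = x ↔ (x = e.symm 0 ∨ x = e.symm 1) := by
      intro x
      rw [hhp, dn_apply, Equiv.symm_apply_eq]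
      simp only [hFp_apply]
      constructor
      · intro hxx
        rcases eq_or_ne (e x) 0 with h0 | h0
        · exact Or.inl ((Equiv.eq_symm_apply e).mpr h0)
        · have h1 : e x * e x = 1 := by nth_rewrite 2 [← hxx]; exact mul_inv_cancel₀ h0
          rcases mul_self_eq_one_iff.mp h1 with h2 | h2
          · exact Or.inr ((Equiv.eq_symm_apply e).mpr h2)
          · refine Or.inr ((Equiv.eq_symm_apply e).mpr ?_)
            rw [← CharTwo.neg_eq (1 : F)]
            exact h2
      · rintro (h | h) <;> rw [h, Equiv.apply_symm_apply]
        · exact inv_zero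
        · exact inv_one
    have hpne : hp ≠ 1 := by
      intro h1
      have h2 := (hfix (e.symm ζ)).mp (by rw [h1, Perm.one_apply])
      rcases h2 with h | h
      · exact hζ0 (e.symm.injective h)
      · exact hζ1 (e.symm.injective h)
    have hord : orderOf hp = 2 := orderOf_eq_prime (by rw [pow_two, hinv]) hpne
    have hne01 : (e.symm 0 : Fin (2 ^ a)) ≠ e.symm 1 := by
      intro h
      exact zero_ne_one (e.symm.injective h)
    have hsupp : hp.support = ({e.symm 0, e.symm 1} : Finset (Fin (2 ^ a)))ᶜ := by
      ext x
      rw [Perm.mem_support, Finset.mem_compl, Finset.mem_insert, Finset.mem_singleton,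
        Ne, hfix x]
    have hcard : hp.support.card = 2 ^ a - 2 := by
      rw [hsupp, Finset.card_compl, Finset.card_insert_of_notMem (by simp [hne01]),
        Finset.card_singleton, Fintype.card_fin]
    rw [sign_involution hp hord, hcard]
    have hdiv : (2 ^ a - 2) / 2 = 2 * 2 ^ (a - 2) - 1 := by
      have hb : 2 ^ a = 4 * 2 ^ (a - 2) := by
        calc 2 ^ a = 2 ^ ((a - 2) + 2) := by congr 1; omega
        _ = 4 * 2 ^ (a - 2) := by rw [pow_add]; ring
      omega
    rw [hdiv]
    refine Odd.neg_one_pow ?_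
    rw [Nat.odd_iff]
    have := Nat.two_pow_pos (a - 2)
    omega
  · -- hp * M * hp⁻¹ = M'
    have hinv : hp * hp = 1 := by
      rw [hhp, ← dn_mul, ← dn_one]
      congr 1
      ext x
      simp [Perm.mul_apply, hFp_apply]
      exact inv_inv x
    have hpinv : hp⁻¹ = hp := inv_eq_of_mul_eq_one_left hinv
    rw [hpinv]
    ext x
    have hcompute : (ζ * (e x)⁻¹)⁻¹ = ζ⁻¹ * e x := by
      rw [mul_inv_rev, show (e x)⁻¹⁻¹ = e x by exact inv_inv (e x)]; ring
    simp only [Perm.mul_apply, hhp, hM, hM', dn_apply, Equiv.apply_symm_apply,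
      hFp_apply, hMF, hMF', Equiv.mulLeft₀_apply, hcompute]
  · -- witness
    exact hwitness


lemma der_order_two {a : ℕ} (ha : 3 ≤ a) (σ : Perm (Fin (2 ^ a))) (p : ℕ) (hp : p.Prime)
    (hord : orderOf σ = p) (hder : ∀ x, σ x ≠ x) : p = 2 := by
  have hct := cycleType_of_prime p hp σ hord
  have hsum := σ.sum_cycleType
  rw [hct, Multiset.sum_replicate, smul_eq_mul] at hsum
  have hsupp : σ.support = Finset.univ := by ext x; simp [Perm.mem_support, hder x]
  rw [hsupp, Finset.card_univ, Fintype.card_fin] at hsum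
  have hdvd : p ∣ 2 ^ a := ⟨2 ^ a / p, by rw [mul_comm]; exact hsum.symm⟩
  exact (Nat.prime_dvd_prime_iff_eq hp Nat.prime_two).mp (hp.dvd_of_dvd_pow hdvd)

lemma order_two_sq {G : Type*} [Group G] {g : G} (h : orderOf g = 2) : g * g = 1 := by
  have := pow_orderOf_eq_one g
  rw [h, pow_two] at this
  exact this

lemma mixed (a : ℕ) (ha : 3 ≤ a) (c d : alternatingGroup (Fin (2 ^ a)))
    (H : ∀ c' d' : alternatingGroup (Fin (2 ^ a)), IsConj c c' → IsConj d d' →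
        Subgroup.closure {c', d'} = ⊤)
    (q : ℕ) (hq : q.Prime) (hqd : orderOf (↑d : Perm (Fin (2 ^ a))) = q)
    (hc2 : orderOf (↑c : Perm (Fin (2 ^ a))) = 2)
    (hcder : ∀ x, (↑c : Perm (Fin (2 ^ a))) x ≠ x)
    (y : Fin (2 ^ a)) (hy : (↑d : Perm (Fin (2 ^ a))) y = y) : False := by
  have hn8 : 8 ≤ 2 ^ a := by
    calc (8 : ℕ) = 2 ^ 3 := by norm_num
    _ ≤ 2 ^ a := Nat.pow_le_pow_right (by norm_num) ha
  have hcard : Fintype.card (Fin (2 ^ a)) = 2 ^ a := Fintype.card_fin _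
  have hcard6 : 6 ≤ Fintype.card (Fin (2 ^ a)) := by omega
  have hc2' : (↑c : Perm (Fin (2 ^ a))) * ↑c = 1 := order_two_sq hc2
  have x0 : Fin (2 ^ a) := ⟨0, by omega⟩
  by_cases h2f : ∃ y2, y2 ≠ y ∧ (↑d : Perm (Fin (2 ^ a))) y2 = y2
  · -- B2a : two fixed points of d
    obtain ⟨y2, hy2ne, hy2⟩ := h2f
    have hx0c : x0 ≠ (↑c : Perm (Fin (2 ^ a))) x0 := fun h => hcder x0 h.symm
    obtain ⟨g, hgs, hgm1, hgm2⟩ :=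
      exists_even_map_two hcard6 x0 ((↑c : Perm (Fin (2 ^ a))) x0) y y2 hx0c (Ne.symm hy2ne)
    have hginv1 : g⁻¹ y = x0 := Perm.inv_eq_iff_eq.mpr hgm1.symm
    have hginv2 : g⁻¹ y2 = (↑c : Perm (Fin (2 ^ a))) x0 := Perm.inv_eq_iff_eq.mpr hgm2.symm
    have hccx : (↑c : Perm (Fin (2 ^ a))) ((↑c : Perm (Fin (2 ^ a))) x0) = x0 := by
      rw [← Perm.mul_apply, hc2', Perm.one_apply]
    have hXmem : g * ↑c * g⁻¹ ∈ pairSub y y2 := by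
      refine mem_pairSub.mpr (Or.inr ⟨?_, ?_⟩)
      · rw [Perm.mul_apply, Perm.mul_apply, hginv1, hgm2]
      · rw [Perm.mul_apply, Perm.mul_apply, hginv2, hccx, hgm1]
    have hdmem : (↑d : Perm (Fin (2 ^ a))) ∈ pairSub y y2 :=
      mem_pairSub.mpr (Or.inl ⟨hy, hy2⟩)
    obtain ⟨u', v', huv, hu, hv⟩ := exists_fresh ({y, y2} : Finset (Fin (2 ^ a)))
      (by
        have h2 := Finset.card_insert_le y ({y2} : Finset (Fin (2 ^ a)))
        simp only [Finset.card_singleton] at h2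
        omega)
    simp only [Finset.mem_insert, Finset.mem_singleton, not_or] at hu
    obtain ⟨w, hws, hwy⟩ := exists_even_send hcard6 y u'
    have hwnot : w ∉ pairSub y y2 := by
      intro hm
      rcases mem_pairSub.mp hm with ⟨h1, _⟩ | ⟨h1, _⟩
      · rw [hwy] at h1; exact hu.1 h1
      · rw [hwy] at h1; exact hu.2 h1
    exact contra c d H (pairSub y y2) (g * ↑c * g⁻¹) (↑d) w hXmem hdmem hws hwnot
      g 1 hgs (by simp) rfl (by simp)
  · -- B2b : unique fixed point
    push_neg at h2f
    have hsuppd : (↑d : Perm (Fin (2 ^ a))).support = ({y} : Finset (Fin (2 ^ a)))ᶜ := by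
      ext x
      simp only [Perm.mem_support, Finset.mem_compl, Finset.mem_singleton]
      constructor
      · intro hne heq; rw [heq] at hne; exact hne hy
      · intro hne heq; exact (h2f x hne) heq
    have hcardd : (↑d : Perm (Fin (2 ^ a))).support.card = 2 ^ a - 1 := by
      rw [hsuppd, Finset.card_compl, Finset.card_singleton, hcard]
    have hdvd : q ∣ 2 ^ a - 1 := by
      have hct := cycleType_of_prime q hq (↑d : Perm (Fin (2 ^ a))) hqd
      have hsum := Equiv.Perm.sum_cycleType (↑d : Perm (Fin (2 ^ a)))
      rw [hct, Multiset.sum_replicate, smul_eq_mul, hcardd] at hsum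
      exact ⟨(2 ^ a - 1) / q, by rw [mul_comm]; exact hsum.symm⟩
    obtain ⟨K, T, M, M', h, hTK, hMK, hM'K, hTT, hTffp, hMq, ⟨yM, hyM⟩, hhs, hhM, w, hws, hwK⟩ :=
      field_setup a ha q hq hdvd
    -- LEG 1 : conjugate c to T
    have hTord : orderOf T = 2 := by
      refine orderOf_eq_prime (by rw [pow_two, hTT]) ?_
      intro h1
      exact hTffp x0 (by rw [h1, Perm.one_apply])
    have hsuppc : (↑c : Perm (Fin (2 ^ a))).support = Finset.univ := by
      ext x; simp [Perm.mem_support, hcder x]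
    have hsuppT : T.support = Finset.univ := by
      ext x; simp [Perm.mem_support, hTffp x]
    have hconj1 : IsConj (↑c : Perm (Fin (2 ^ a))) T :=
      isConj_of_prime 2 Nat.prime_two _ _ hc2 hTord (by rw [hsuppc, hsuppT])
    obtain ⟨g1, hg1s, hg1⟩ := even_conj_of_comm _ _ (Equiv.swap x0 ((↑c : Perm _) x0)) hconj1
      (swap_conj_self _ hc2' x0)
      (Equiv.Perm.sign_swap (fun h => hcder x0 h.symm))
    -- LEG 2 : conjugate d to M or M'
    have hsuppM : M.support = ({yM} : Finset (Fin (2 ^ a)))ᶜ := by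
      ext x
      simp only [Perm.mem_support, Finset.mem_compl, Finset.mem_singleton]
      rw [Ne, hyM x]
    have hMcard : M.support.card = 2 ^ a - 1 := by
      rw [hsuppM, Finset.card_compl, Finset.card_singleton, hcard]
    have hconj2 : IsConj M (↑d : Perm (Fin (2 ^ a))) :=
      isConj_of_prime q hq _ _ hMq hqd (by rw [hMcard, hcardd])
    obtain ⟨g2, hg2⟩ := isConj_iff.mp hconj2
    rcases Int.units_eq_one_or (Perm.sign g2) with hsg | hsg
    · refine contra c d H K T M w hTK hMK hws hwK g1 g2⁻¹ hg1s (by simp [hsg]) hg1 ?_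
      rw [← hg2]; group
    · refine contra c d H K T M' w hTK hM'K hws hwK g1 (h * g2⁻¹) hg1s
        (by simp [hhs, hsg]) hg1 ?_
      rw [← hhM, ← hg2]; group


lemma bothfix {β : Type} [Fintype β] [DecidableEq β] (hcard6 : 6 ≤ Fintype.card β)
    (c d : alternatingGroup β)
    (H : ∀ c' d' : alternatingGroup β, IsConj c c' → IsConj d d' →
        Subgroup.closure {c', d'} = ⊤)
    (x : β) (hx : (↑c : Perm β) x = x) (y : β) (hy : (↑d : Perm β) y = y) : False := by
  obtain ⟨g, hgs, hgy⟩ := exists_even_send hcard6 y x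
  have hginv : g⁻¹ x = y := Perm.inv_eq_iff_eq.mpr hgy.symm
  have hYmem : g * ↑d * g⁻¹ ∈ fixSub x := by
    rw [mem_fixSub, Perm.mul_apply, Perm.mul_apply, hginv, hy, hgy]
  have hXmem : (↑c : Perm β) ∈ fixSub x := mem_fixSub.mpr hx
  obtain ⟨u', v', huv, hu, hv⟩ := exists_fresh ({x} : Finset β)
    (by simp only [Finset.card_singleton]; omega)
  simp only [Finset.mem_singleton] at hu
  obtain ⟨w, hws, hwx⟩ := exists_even_send hcard6 x u'
  have hwnot : w ∉ fixSub x := by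
    rw [mem_fixSub, hwx]
    exact hu
  exact contra c d H (fixSub x) (↑c) (g * ↑d * g⁻¹) w hXmem hYmem hws hwnot
    1 g (by simp) hgs (by simp) rfl

lemma bothder {β : Type} [Fintype β] [DecidableEq β] (hcard6 : 6 ≤ Fintype.card β)
    (c d : alternatingGroup β)
    (H : ∀ c' d' : alternatingGroup β, IsConj c c' → IsConj d d' →
        Subgroup.closure {c', d'} = ⊤)
    (hc2 : orderOf (↑c : Perm β) = 2) (hcder : ∀ x, (↑c : Perm β) x ≠ x)
    (hd2 : orderOf (↑d : Perm β) = 2) (hdder : ∀ x, (↑d : Perm β) x ≠ x) : False := by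
  have hsuppc : (↑c : Perm β).support = Finset.univ := by
    ext x; simp [Perm.mem_support, hcder x]
  have hsuppd : (↑d : Perm β).support = Finset.univ := by
    ext x; simp [Perm.mem_support, hdder x]
  have hconj : IsConj (↑d : Perm β) (↑c : Perm β) :=
    isConj_of_prime 2 Nat.prime_two _ _ hd2 hc2 (by rw [hsuppc, hsuppd])
  obtain ⟨x1, hx1⟩ : ∃ x1 : β, True := by
    obtain ⟨u', v', _, _, _⟩ := exists_fresh (∅ : Finset β) (by simp; omega)
    exact ⟨u', trivial⟩
  obtain ⟨g, hgs, hgd⟩ := even_conj_of_comm _ _ (Equiv.swap x1 ((↑d : Perm β) x1)) hconj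
    (swap_conj_self _ (order_two_sq hd2) x1)
    (Equiv.Perm.sign_swap (fun h => hdder x1 h.symm))
  -- three distinct points for the witness 3-cycle
  obtain ⟨z0, z1, hz01, _, _⟩ := exists_fresh (∅ : Finset β) (by simp; omega)
  obtain ⟨z2, z2', hz2', hz2m, _⟩ := exists_fresh ({z0, z1} : Finset β)
    (by
      have h2 := Finset.card_insert_le z0 ({z1} : Finset β)
      simp only [Finset.card_singleton] at h2
      omega)
  simp only [Finset.mem_insert, Finset.mem_singleton, not_or] at hz2m
  have d02 : z0 ≠ z2 := fun h => hz2m.1 h.symm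
  have d12 : z1 ≠ z2 := fun h => hz2m.2 h.symm
  set w := Equiv.swap z0 z1 * Equiv.swap z1 z2 with hw
  have hws : Perm.sign w = 1 := by
    rw [hw, map_mul, Equiv.Perm.sign_swap hz01, Equiv.Perm.sign_swap d12]
    norm_num
  have hw0 : w z0 = z1 := by
    rw [hw, Perm.mul_apply, Equiv.swap_apply_of_ne_of_ne hz01 d02, Equiv.swap_apply_left]
  have hw1 : w z1 = z2 := by
    rw [hw, Perm.mul_apply, Equiv.swap_apply_left,
      Equiv.swap_apply_of_ne_of_ne (Ne.symm d02) (Ne.symm d12)]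
  have hwnot : w ∉ Subgroup.zpowers (↑c : Perm β) := by
    intro hm
    obtain ⟨k, hk⟩ := Subgroup.mem_zpowers_iff.mp hm
    have hww : w * w = 1 := by
      have hcz : (↑c : Perm β) ^ (2 : ℤ) = 1 := by
        rw [show (2 : ℤ) = ((2 : ℕ) : ℤ) by norm_num, zpow_natCast, pow_two]
        exact order_two_sq hc2
      rw [← hk, ← zpow_add, ← two_mul, zpow_mul, hcz, one_zpow]
    have := congrArg (fun f => f z0) hww
    simp only [Perm.mul_apply, Perm.one_apply] at this
    rw [hw0, hw1] at this
    exact d02 this.symm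
  exact contra c d H (Subgroup.zpowers (↑c : Perm β)) (↑c) (↑c) w
    (Subgroup.mem_zpowers _) (Subgroup.mem_zpowers _) hws hwnot
    1 g (by simp) hgs (by simp) hgd


end Stmt17

theorem stmt_17 (a : ℕ) (ha : 3 ≤ a) :
    ¬ ∃ c d : alternatingGroup (Fin (2 ^ a)),
      (∃ p : ℕ, p.Prime ∧ orderOf c = p) ∧
      (∃ q : ℕ, q.Prime ∧ orderOf d = q) ∧
      ∀ c' d' : alternatingGroup (Fin (2 ^ a)), IsConj c c' → IsConj d d' →
        Subgroup.closure {c', d'} = ⊤ := by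
  rintro ⟨c, d, ⟨p, hp, hpc⟩, ⟨q, hq, hqd⟩, H⟩
  have hn8 : 8 ≤ 2 ^ a := by
    calc (8 : ℕ) = 2 ^ 3 := by norm_num
    _ ≤ 2 ^ a := Nat.pow_le_pow_right (by norm_num) ha
  have hcard6 : 6 ≤ Fintype.card (Fin (2 ^ a)) := by rw [Fintype.card_fin]; omega
  have hco : orderOf (↑c : Perm (Fin (2 ^ a))) = p := by
    rw [← hpc]
    have h1 := orderOf_injective ((alternatingGroup (Fin (2 ^ a))).subtype)
      (Subgroup.subtype_injective _) c
    simpa using h1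
  have hdo : orderOf (↑d : Perm (Fin (2 ^ a))) = q := by
    rw [← hqd]
    have h1 := orderOf_injective ((alternatingGroup (Fin (2 ^ a))).subtype)
      (Subgroup.subtype_injective _) d
    simpa using h1
  have H' : ∀ d' c' : alternatingGroup (Fin (2 ^ a)), IsConj d d' → IsConj c c' →
      Subgroup.closure {d', c'} = ⊤ := by
    intro d' c' h1 h2
    rw [Set.pair_comm]
    exact H c' d' h2 h1
  by_cases hcf : ∃ x, (↑c : Perm (Fin (2 ^ a))) x = x
  · obtain ⟨x, hx⟩ := hcf
    by_cases hdf : ∃ y, (↑d : Perm (Fin (2 ^ a))) y = y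
    · obtain ⟨y, hy⟩ := hdf
      exact Stmt17.bothfix hcard6 c d H x hx y hy
    · -- d is a derangement, c has a fixed point
      push_neg at hdf
      have hq2 : q = 2 := Stmt17.der_order_two ha _ q hq hdo hdf
      exact Stmt17.mixed a ha d c H' p hp hco (by rw [hdo, hq2]) hdf x hx
  · push_neg at hcf
    have hp2 : p = 2 := Stmt17.der_order_two ha _ p hp hco hcf
    by_cases hdf : ∃ y, (↑d : Perm (Fin (2 ^ a))) y = y
    · obtain ⟨y, hy⟩ := hdf
      exact Stmt17.mixed a ha c d H q hq hdo (by rw [hco, hp2]) hcf y hy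
    · push_neg at hdf
      have hq2 : q = 2 := Stmt17.der_order_two ha _ q hq hdo hdf
      exact Stmt17.bothder hcard6 c d H (by rw [hco, hp2]) hcf (by rw [hdo, hq2]) hdf
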